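/- For the complete interference graph with classes $c = 1, \dots, C$ and parameters $\lambda_c, \mu_c, \nu_c > 0$, suppose $\max_{c} \lambda_c/\nu_c < 1 - \sum_{d} \lambda_d/\mu_d$. Define $\xi_c = \frac{\lambda_c}{\nu_c (1 - \sum_d \lambda_d/\mu_d)}$. Then $0 < \xi_c < 1$ for all $c$, and with $\pi^b = \frac{1}{1 + \sum_c \frac{\nu_c}{\mu_c}\xi_c}$ the equations $\lambda_c \xi_c^n (1-\xi_c) = \nu_c \pi^b \xi_c^{n+1}(1-\xi_c)$ hold for all $c$ and all $n \geq 0$; i.e., $x^*_{c,n} = (1-\xi_c)\xi_c^n$ is an equilibrium of the mean-field dynamics. -/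

import Mathlib

/-- Complete interference graph: the geometric profile `(1-ξ_c)ξ_c^n` is an
equilibrium of the mean-field dynamics. -/
theorem complete_graph_equilibrium
    (C : ℕ) (lam mu nu : Fin C → ℝ)
    (hlam : ∀ c, 0 < lam c) (hmu : ∀ c, 0 < mu c) (hnu : ∀ c, 0 < nu c)
    (hcond : ∀ c, lam c / nu c < 1 - ∑ d, lam d / mu d)
    (ξ : Fin C → ℝ) (hξ : ∀ c, ξ c = lam c / (nu c * (1 - ∑ d, lam d / mu d)))
    (πb : ℝ) (hπb : πb = 1 / (1 + ∑ c, nu c / mu c * ξ c)) :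
    (∀ c, 0 < ξ c ∧ ξ c < 1) ∧
      (∀ c, ∀ n : ℕ,
        lam c * (ξ c ^ n * (1 - ξ c)) = nu c * πb * (ξ c ^ (n + 1) * (1 - ξ c))) := by
  set S := ∑ d, lam d / mu d with hS
  have hpos : ∀ c : Fin C, 0 < 1 - S := fun c =>
    lt_trans (div_pos (hlam c) (hnu c)) (hcond c)
  constructor
  · intro c
    have h1 := hpos c
    constructor
    · rw [hξ c]
      exact div_pos (hlam c) (mul_pos (hnu c) h1)
    · rw [hξ c, div_lt_one (mul_pos (hnu c) h1)]
      have := (div_lt_iff₀ (hnu c)).mp (hcond c)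
      linarith [this]
  · intro c n
    have h1 := hpos c
    have hsum : ∑ d, nu d / mu d * ξ d = S / (1 - S) := by
      rw [hS, Finset.sum_div]
      apply Finset.sum_congr rfl
      intro d _
      have hnud := (hnu d).ne'
      rw [hξ d, div_mul_div_comm, div_div,
        show mu d * (nu d * (1 - S)) = nu d * (mu d * (1 - S)) by ring,
        mul_div_mul_left _ _ hnud]
    have hπ : πb = 1 - S := by
      rw [hπb, hsum]
      field_simp
      ring
    have key : nu c * πb * ξ c = lam c := by
      have hne : nu c * (1 - S) ≠ 0 := (mul_pos (hnu c) h1).ne'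
      rw [hπ, hξ c, mul_comm, div_mul_cancel₀ _ hne]
    calc lam c * (ξ c ^ n * (1 - ξ c))
        = (nu c * πb * ξ c) * (ξ c ^ n * (1 - ξ c)) := by rw [key]
      _ = nu c * πb * (ξ c ^ (n + 1) * (1 - ξ c)) := by rw [pow_succ]; ring
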